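/- For subsets S_1,…,S_m and T_1,…,T_l of a finite set V, one has (∑_{i=1}^m U_{S_i}) ∩ (∑_{j=1}^l U_{T_j}) = ∑_{i=1}^m ∑_{j=1}^l U_{S_i ∩ T_j}. -/

import Mathlib

open Submodule Finset

variable {V : Type*} [Fintype V] [DecidableEq V]

/-- The set of nontrivial partitions `Π*(α)` of `α`, encoded as setoids different from `⊤`
(the one-block partition). -/
def NontrivPart (α : Type*) := {P : Setoid α // P ≠ ⊤}

/-- Restriction `P|_S` of a partition of `V` to a subset `S`: the partition of `S` whose blocks
are the nonempty intersections of blocks of `P` with `S`. -/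
def restrictS (S : Set V) (P : Setoid V) : Setoid ↥S := Setoid.comap Subtype.val P

open Classical in
/-- The indicator function `1_{S,π} : Π*(V) → ℝ`, equal to `1` at `P` iff `P|_S = π`. -/
noncomputable def ind (S : Set V) (π : Setoid ↥S) : NontrivPart V → ℝ :=
  fun P => if restrictS S P.1 = π then 1 else 0

/-- The subspace `U_S ⊆ ℝ^{Π*(V)}` spanned by the indicators `1_{S,π}` over nontrivial
partitions `π` of `S` (equal to `{0}` when `|S| ≤ 1`, since then no nontrivial `π` exists). -/
noncomputable def U (S : Set V) : Submodule ℝ (NontrivPart V → ℝ) :=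
  Submodule.span ℝ {f | ∃ π : Setoid ↥S, π ≠ ⊤ ∧ f = ind S π}

/-- Bell number `B n`: the number of partitions (setoids) of an `n`-element set. -/
noncomputable def bell (n : ℕ) : ℕ := Nat.card (Setoid (Fin n))

/-- Stirling number of the second kind `S(u,j)`: the number of partitions of a `u`-element set
into exactly `j` blocks. -/
noncomputable def stirling (u j : ℕ) : ℕ :=
  Nat.card {σ : Setoid (Fin u) // Nat.card (Quotient σ) = j}

set_option linter.unusedSectionVars false


instance setoidFinite (α : Type*) [Finite α] : Finite (Setoid α) :=
  Finite.of_injective (fun s : Setoid α => ⇑s) fun _ _ h => Setoid.eq_iff_rel_eq.2 h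

noncomputable instance setoidFintype (α : Type*) [Finite α] : Fintype (Setoid α) :=
  Fintype.ofFinite _

open Classical in
noncomputable def zf (σ : Setoid V) : NontrivPart V → ℝ :=
  fun P => if σ ≤ P.1 then 1 else 0

noncomputable def cf (σ : Setoid V) : NontrivPart V → ℝ := zf σ - 1

def SuppS (σ : Setoid V) : Set V := {x | ∃ y, y ≠ x ∧ σ x y}

def extS (S : Set V) (τ : Setoid ↥S) : Setoid V :=
  ⟨fun x y => x = y ∨ ∃ hx : x ∈ S, ∃ hy : y ∈ S, τ ⟨x, hx⟩ ⟨y, hy⟩,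
   ⟨fun _ => Or.inl rfl,
    fun h => h.elim (fun e => Or.inl e.symm)
      (fun ⟨hx, hy, hr⟩ => Or.inr ⟨hy, hx, τ.symm' hr⟩),
    fun hxy hyz => by
      rcases hxy with rfl | ⟨hx, hy, hxy⟩
      · exact hyz
      · rcases hyz with rfl | ⟨hy', hz, hyz⟩
        · exact Or.inr ⟨hx, hy, hxy⟩
        · exact Or.inr ⟨hx, hz, τ.trans' hxy hyz⟩⟩⟩

lemma extS_le_iff {S : Set V} {τ : Setoid ↥S} {P : Setoid V} :
    extS S τ ≤ P ↔ τ ≤ restrictS S P := by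
  constructor
  · intro h a b hab
    exact h (Or.inr ⟨a.2, b.2, by simpa using hab⟩)
  · intro h x y hxy
    rcases hxy with rfl | ⟨hx, hy, hxy⟩
    · exact P.refl' x
    · exact h hxy

lemma suppS_extS {S : Set V} (τ : Setoid ↥S) : SuppS (extS S τ) ⊆ S := by
  rintro x ⟨y, hxy, (rfl | ⟨hx, _, _⟩)⟩
  · exact absurd rfl hxy
  · exact hx

lemma le_iff_of_suppS {S : Set V} {σ P : Setoid V} (h : SuppS σ ⊆ S) :
    σ ≤ P ↔ restrictS S σ ≤ restrictS S P := by
  constructor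
  · intro hle a b hab
    exact hle hab
  · intro hle x y hxy
    by_cases hxy' : x = y
    · exact hxy' ▸ P.refl' x
    · have hx : x ∈ S := h ⟨y, fun e => hxy' e.symm, hxy⟩
      have hy : y ∈ S := h ⟨x, hxy', σ.symm' hxy⟩
      exact hle (x := ⟨x, hx⟩) (y := ⟨y, hy⟩) hxy

lemma cf_bot : cf (⊥ : Setoid V) = 0 := by
  funext P
  simp [cf, zf, bot_le, Pi.sub_apply, Pi.one_apply]

open Classical in
lemma ind_eq (S : Set V) (τ : Setoid ↥S) (hτ : τ ≠ ⊤) :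
    ind S τ = cf (extS S τ) - cf (extS S (⊤ : Setoid ↥S))
      - ∑ π ∈ Finset.univ.filter (fun π : Setoid ↥S => τ < π ∧ π ≠ ⊤), ind S π := by
  funext P
  set ρ := restrictS S P.1 with hρ
  have hsum : (∑ π ∈ Finset.univ.filter (fun π : Setoid ↥S => τ < π ∧ π ≠ ⊤), ind S π) P
      = if τ < ρ ∧ ρ ≠ ⊤ then (1 : ℝ) else 0 := by
    rw [Finset.sum_apply]
    have : ∀ π : Setoid ↥S, ind S π P = if ρ = π then (1:ℝ) else 0 := fun π => rfl
    simp only [this]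
    rw [Finset.sum_ite_eq]
    simp
  have h1 : cf (extS S τ) P = (if τ ≤ ρ then (1:ℝ) else 0) - 1 := by
    simp only [cf, Pi.sub_apply, Pi.one_apply, zf]
    rw [if_congr (extS_le_iff (τ := τ)) rfl rfl]
  have h2 : cf (extS S (⊤ : Setoid ↥S)) P = (if ρ = ⊤ then (1:ℝ) else 0) - 1 := by
    simp only [cf, Pi.sub_apply, Pi.one_apply, zf]
    rw [if_congr (extS_le_iff (τ := (⊤ : Setoid ↥S))) rfl rfl]
    congr 1
    simp [top_le_iff, eq_comm]
    exact if_congr Iff.rfl rfl rfl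
  have hland : ind S τ P = if ρ = τ then (1:ℝ) else 0 := rfl
  simp only [Pi.sub_apply, hsum, h1, h2, hland]
  by_cases hA : ρ = τ
  · subst hA
    simp [hτ, le_refl, lt_irrefl]
  · by_cases hB : τ ≤ ρ
    · have hlt : τ < ρ := lt_of_le_of_ne hB (fun e => hA e.symm)
      by_cases hC : ρ = ⊤
      · simp only [hC] at hA ⊢
        simp [hB, hlt, Ne.symm hτ, hC, fun e : (⊤:Setoid ↥S) = τ => hτ e.symm]
      · simp [hA, hB, hC, hlt]
    · have hC : ρ ≠ ⊤ := fun h => hB (le_of_le_of_eq le_top h.symm)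
      have hlt : ¬ (τ < ρ) := fun h => hB h.le
      simp [hA, hB, hC, hlt]

lemma ind_mem_span (S : Set V) (τ : Setoid ↥S) (hτ : τ ≠ ⊤) :
    ind S τ ∈ span ℝ (cf '' {σ : Setoid V | SuppS σ ⊆ S}) := by
  classical
  revert hτ
  refine (wellFounded_gt (α := Setoid ↥S)).induction
    (C := fun τ => τ ≠ ⊤ → ind S τ ∈ span ℝ (cf '' {σ : Setoid V | SuppS σ ⊆ S})) τ ?_
  intro τ IH hτ
  rw [ind_eq S τ hτ]
  have hmem : ∀ ρ : Setoid ↥S, cf (extS S ρ) ∈ span ℝ (cf '' {σ : Setoid V | SuppS σ ⊆ S}) :=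
    fun ρ => subset_span ⟨extS S ρ, suppS_extS ρ, rfl⟩
  refine sub_mem (sub_mem (hmem τ) (hmem ⊤)) (sum_mem fun π hπ => ?_)
  rw [Finset.mem_filter] at hπ
  exact IH π hπ.2.1 hπ.2.2

open Classical in
lemma cf_mem_U (S : Set V) (σ : Setoid V) (hσ : SuppS σ ⊆ S) : cf σ ∈ U S := by
  have hrepr : cf σ = ∑ π ∈ Finset.univ.filter (fun π : Setoid ↥S => π ≠ ⊤),
      ((if restrictS S σ ≤ π then (1:ℝ) else 0) - 1) • ind S π := by
    funext P
    set ρ := restrictS S P.1 with hρ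
    rw [Finset.sum_apply]
    have hterm : ∀ π : Setoid ↥S,
        (((if restrictS S σ ≤ π then (1:ℝ) else 0) - 1) • ind S π) P
        = if ρ = π then ((if restrictS S σ ≤ π then (1:ℝ) else 0) - 1) else 0 := by
      intro π
      have : ind S π P = if ρ = π then (1:ℝ) else 0 := rfl
      simp only [Pi.smul_apply, this, smul_eq_mul, mul_ite, mul_one, mul_zero]
    simp only [hterm]
    rw [Finset.sum_ite_eq]
    have hlhs : cf σ P = (if restrictS S σ ≤ ρ then (1:ℝ) else 0) - 1 := by
      simp only [cf, Pi.sub_apply, Pi.one_apply, zf]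
      rw [if_congr (le_iff_of_suppS hσ) rfl rfl]
    rw [hlhs]
    by_cases hC : ρ = ⊤
    · simp [hC, le_top]
    · simp [hC]
  rw [hrepr]
  refine sum_mem fun π hπ => smul_mem _ _ (subset_span ⟨π, (Finset.mem_filter.1 hπ).2, rfl⟩)

lemma U_eq (S : Set V) : U S = span ℝ (cf '' {σ : Setoid V | SuppS σ ⊆ S}) := by
  apply le_antisymm
  · rw [U]
    refine span_le.2 ?_
    rintro f ⟨π, hπ, rfl⟩
    exact ind_mem_span S π hπ
  · refine span_le.2 ?_
    rintro f ⟨σ, hσ, rfl⟩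
    exact cf_mem_U S σ hσ

open Classical in
lemma cf_indep (hV : (⊥ : Setoid V) ≠ ⊤) :
    LinearIndependent ℝ (fun σ : {σ : Setoid V // σ ≠ ⊥} => cf σ.1) := by
  rw [linearIndependent_iff']
  intro s g hsum i hi
  -- evaluations
  have heval : ∀ P : NontrivPart V,
      (∑ τ ∈ s, g τ * (if τ.1 ≤ P.1 then (1:ℝ) else 0)) - ∑ τ ∈ s, g τ = 0 := by
    intro P
    have h0 := congrFun hsum P
    simp only [Finset.sum_apply, Pi.smul_apply, cf, Pi.sub_apply, Pi.one_apply, zf,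
      smul_eq_mul, Pi.zero_apply, mul_sub, mul_one] at h0
    rwa [Finset.sum_sub_distrib] at h0
  -- total sum is zero
  have hA : ∑ τ ∈ s, g τ = 0 := by
    have h0 := heval ⟨⊥, hV⟩
    have hz : ∀ τ ∈ s, g τ * (if τ.1 ≤ (⊥ : Setoid V) then (1:ℝ) else 0) = 0 := by
      intro τ _
      rw [if_neg (fun h => τ.2 (le_bot_iff.1 h)), mul_zero]
    rw [Finset.sum_congr rfl hz, Finset.sum_const_zero, zero_sub, neg_eq_zero] at h0
    exact h0
  -- coefficients of non-top setoids vanish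
  have key : ∀ ρ : Setoid V, ∀ τ ∈ s, τ.1 = ρ → ρ ≠ ⊤ → g τ = 0 := by
    intro ρ
    induction ρ using WellFoundedLT.induction with
    | ind ρ IH =>
      intro τ hτs hτρ hρtop
      have h0 := heval ⟨ρ, hρtop⟩
      rw [hA, sub_zero] at h0
      have h1 : ∑ τ' ∈ s, (if τ'.1 ≤ ρ then g τ' else 0) = 0 := by
        refine Eq.trans (Finset.sum_congr rfl fun τ' _ => ?_) h0
        rw [mul_ite, mul_one, mul_zero]
      rw [← Finset.sum_filter] at h1
      have hτmem : τ ∈ s.filter (fun τ' => τ'.1 ≤ ρ) :=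
        Finset.mem_filter.2 ⟨hτs, le_of_eq hτρ⟩
      rw [← Finset.add_sum_erase _ _ hτmem] at h1
      have hrest : ∑ τ' ∈ (s.filter (fun τ' => τ'.1 ≤ ρ)).erase τ, g τ' = 0 := by
        refine Finset.sum_eq_zero fun τ' hτ' => ?_
        have hne := Finset.ne_of_mem_erase hτ'
        have hmem := Finset.mem_of_mem_erase hτ'
        rw [Finset.mem_filter] at hmem
        have hlt : τ'.1 < ρ := lt_of_le_of_ne hmem.2
          (fun e => hne (Subtype.ext (e.trans hτρ.symm)))
        exact IH τ'.1 hlt τ' hmem.1 rfl (fun h => absurd (h ▸ hlt) not_top_lt)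
      rw [hrest, add_zero] at h1
      exact h1
  by_cases htop : i.1 = ⊤
  · have hothers : ∑ τ ∈ s.erase i, g τ = 0 := by
      refine Finset.sum_eq_zero fun τ hτ => ?_
      have hne := Finset.ne_of_mem_erase hτ
      have hmem := Finset.mem_of_mem_erase hτ
      have : τ.1 ≠ ⊤ := fun h => hne (Subtype.ext (h.trans htop.symm))
      exact key τ.1 τ hmem rfl this
    have := Finset.add_sum_erase _ g hi
    rw [hA, hothers, add_zero] at this
    exact this
  · exact key i.1 i hi rfl htop

lemma span_image_inf {ι M : Type*} [AddCommGroup M] [Module ℝ M] {b : ι → M}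
    (hb : LinearIndependent ℝ b) (A B : Set ι) :
    span ℝ (b '' A) ⊓ span ℝ (b '' B) = span ℝ (b '' (A ∩ B)) := by
  apply le_antisymm
  · rintro x hx
    rw [Submodule.mem_inf] at hx
    obtain ⟨hxA, hxB⟩ := hx
    have hA : span ℝ (b '' A) = span ℝ (b '' (A ∩ B)) ⊔ span ℝ (b '' (A \ B)) := by
      rw [← span_union, ← Set.image_union, Set.inter_union_diff]
    rw [hA] at hxA
    obtain ⟨u, hu, v, hv, rfl⟩ := Submodule.mem_sup.1 hxA
    have hv1 : v ∈ span ℝ (b '' B) := by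
      have hu' : u ∈ span ℝ (b '' B) :=
        span_mono (Set.image_mono Set.inter_subset_right) hu
      have : u + v - u ∈ span ℝ (b '' B) := sub_mem hxB hu'
      simpa using this
    have hdisj : Disjoint (span ℝ (b '' (A \ B))) (span ℝ (b '' B)) :=
      hb.disjoint_span_image (Set.disjoint_sdiff_left)
    have hv0 : v = 0 := by
      have := hdisj.le_bot ⟨hv, hv1⟩
      simpa using this
    rw [hv0, add_zero]
    exact hu
  · exact le_inf (span_mono (Set.image_mono Set.inter_subset_left))
      (span_mono (Set.image_mono Set.inter_subset_right))

lemma U_eq' (hV : (⊥ : Setoid V) ≠ ⊤) (S : Set V) :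
    U S = span ℝ ((fun σ : {σ : Setoid V // σ ≠ ⊥} => cf σ.1) ''
      {σ : {σ : Setoid V // σ ≠ ⊥} | SuppS σ.1 ⊆ S}) := by
  rw [U_eq]
  have himg : cf '' {σ : Setoid V | SuppS σ ⊆ S}
      = insert (0 : NontrivPart V → ℝ) ((fun σ : {σ : Setoid V // σ ≠ ⊥} => cf σ.1) ''
        {σ : {σ : Setoid V // σ ≠ ⊥} | SuppS σ.1 ⊆ S}) := by
    ext f
    constructor
    · rintro ⟨σ, hσ, rfl⟩
      by_cases hbot : σ = ⊥
      · subst hbot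
        exact Or.inl cf_bot
      · exact Or.inr ⟨⟨σ, hbot⟩, hσ, rfl⟩
    · rintro (rfl | ⟨σ, hσ, rfl⟩)
      · refine ⟨⊥, ?_, cf_bot⟩
        rintro x ⟨y, hxy, h⟩
        rw [Setoid.bot_def] at h
        exact absurd h.symm hxy
      · exact ⟨σ.1, hσ, rfl⟩
  rw [himg, Submodule.span_insert_zero]



/-- `(∑_i U_{S_i}) ∩ (∑_j U_{T_j}) = ∑_i ∑_j U_{S_i ∩ T_j}`. -/
theorem stmt5 (m l : ℕ) (S : Fin m → Set V) (T : Fin l → Set V) :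
    (⨆ i, U (S i)) ⊓ (⨆ j, U (T j)) = ⨆ i, ⨆ j, U (S i ∩ T j) := by
  classical
  by_cases hV : (⊥ : Setoid V) = ⊤
  · have hemp : IsEmpty (NontrivPart V) :=
      ⟨fun P => P.2 (le_antisymm le_top (le_of_eq_of_le hV.symm bot_le))⟩
    have hsub : Subsingleton (NontrivPart V → ℝ) :=
      ⟨fun f g => funext fun P => hemp.elim P⟩
    apply Submodule.ext
    intro x
    rw [Subsingleton.elim x 0]
    simp [Submodule.zero_mem]
  · set b := (fun σ : {σ : Setoid V // σ ≠ ⊥} => cf (V := V) σ.1) with hb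
    have hAseq : ∀ W : Set V, U W = span ℝ (b '' {σ | SuppS σ.1 ⊆ W}) := U_eq' hV
    simp only [hAseq]
    rw [show (⨆ i, span ℝ (b '' {σ | SuppS σ.1 ⊆ S i}))
        = span ℝ (b '' ⋃ i, {σ | SuppS σ.1 ⊆ S i}) by
      rw [Set.image_iUnion, Submodule.span_iUnion],
      show (⨆ j, span ℝ (b '' {σ | SuppS σ.1 ⊆ T j}))
        = span ℝ (b '' ⋃ j, {σ | SuppS σ.1 ⊆ T j}) by
      rw [Set.image_iUnion, Submodule.span_iUnion]]
    rw [span_image_inf (cf_indep hV)]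
    have hset : ((⋃ i, {σ : {σ : Setoid V // σ ≠ ⊥} | SuppS σ.1 ⊆ S i})
        ∩ ⋃ j, {σ | SuppS σ.1 ⊆ T j}) = ⋃ i, ⋃ j, {σ | SuppS σ.1 ⊆ S i ∩ T j} := by
      ext σ
      simp only [Set.mem_inter_iff, Set.mem_iUnion, Set.mem_setOf_eq, Set.subset_inter_iff]
      tauto
    rw [hset]
    simp only [Set.image_iUnion, Submodule.span_iUnion]
    rfl
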